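/- arXiv:2404.15861 — 2 statements merged into one kernel-verified Lean document; each statement's English description precedes it below -/
import Mathlib

section
/- For any state ψ and self-adjoint involutions A₀, A₁ on one tensor factor and B₀, B₁ on the other, the CHSH expression ⟨A₀⊗B₀⟩ + ⟨A₀⊗B₁⟩ + ⟨A₁⊗B₀⟩ − ⟨A₁⊗B₁⟩ evaluated on ψ is at most 2√2. -/
open Matrix Kronecker

/-- Expectation value ⟨ψ, M ψ⟩ for a matrix observable. -/
noncomputable def expVal {ι : Type*} [Fintype ι] (ψ : ι → ℂ) (M : Matrix ι ι ℂ) : ℂ :=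
  star ψ ⬝ᵥ M.mulVec ψ

section Aux

variable {m n : Type*} [Fintype m] [Fintype n] [DecidableEq m] [DecidableEq n]

private lemma kron_conjT (A : Matrix m m ℂ) (B : Matrix n n ℂ) :
    (A ⊗ₖ B)ᴴ = Aᴴ ⊗ₖ Bᴴ := by
  ext ⟨i, j⟩ ⟨k, l⟩
  simp [Matrix.conjTranspose_apply, Matrix.kroneckerMap_apply]

private lemma sub_kron (A B : Matrix m m ℂ) (C : Matrix n n ℂ) :
    (A - B) ⊗ₖ C = A ⊗ₖ C - B ⊗ₖ C := by
  ext ⟨i, j⟩ ⟨k, l⟩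
  simp [Matrix.kroneckerMap_apply, sub_mul]

private lemma kron_sub (A : Matrix m m ℂ) (B C : Matrix n n ℂ) :
    A ⊗ₖ (B - C) = A ⊗ₖ B - A ⊗ₖ C := by
  ext ⟨i, j⟩ ⟨k, l⟩
  simp [Matrix.kroneckerMap_apply, mul_sub]

private lemma invol_key (P Q : Matrix m m ℂ) (hP : P * P = 1) (hQ : Q * Q = 1) :
    (P * Q - Q * P) * (Q * P - P * Q) + (P * Q + Q * P) * (P * Q + Q * P)
      = (4 : ℂ) • 1 := by
  have hP' : ∀ X : Matrix m m ℂ, P * (P * X) = X := fun X => by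
    rw [← Matrix.mul_assoc, hP, Matrix.one_mul]
  have hQ' : ∀ X : Matrix m m ℂ, Q * (Q * X) = X := fun X => by
    rw [← Matrix.mul_assoc, hQ, Matrix.one_mul]
  have h4 : ((4 : ℂ) • (1 : Matrix m m ℂ)) = 1 + 1 + 1 + 1 := by
    rw [show (4 : ℂ) = 1 + 1 + 1 + 1 by norm_num]
    simp [add_smul]
  rw [h4]
  simp only [Matrix.sub_mul, Matrix.mul_sub, Matrix.add_mul, Matrix.mul_add,
    Matrix.mul_assoc, hP', hQ', hP, hQ, Matrix.mul_one]
  abel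

private lemma chsh_sq (A₀ A₁ : Matrix m m ℂ) (B₀ B₁ : Matrix n n ℂ)
    (hA₀i : A₀ * A₀ = 1) (hA₁i : A₁ * A₁ = 1)
    (hB₀i : B₀ * B₀ = 1) (hB₁i : B₁ * B₁ = 1) :
    (A₀ ⊗ₖ B₀ + A₀ ⊗ₖ B₁ + A₁ ⊗ₖ B₀ - A₁ ⊗ₖ B₁) *
      (A₀ ⊗ₖ B₀ + A₀ ⊗ₖ B₁ + A₁ ⊗ₖ B₀ - A₁ ⊗ₖ B₁)
      = (4 : ℂ) • 1 + (A₀ * A₁ - A₁ * A₀) ⊗ₖ (B₁ * B₀ - B₀ * B₁) := by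
  have h4 : ((4 : ℂ) • (1 : Matrix (m × n) (m × n) ℂ))
      = 1 ⊗ₖ 1 + 1 ⊗ₖ 1 + 1 ⊗ₖ 1 + 1 ⊗ₖ 1 := by
    rw [Matrix.one_kronecker_one, show (4 : ℂ) = 1 + 1 + 1 + 1 by norm_num]
    simp [add_smul]
  rw [h4, sub_kron, kron_sub, kron_sub]
  simp only [Matrix.add_mul, Matrix.sub_mul, Matrix.mul_add, Matrix.mul_sub,
    ← Matrix.mul_kronecker_mul, hA₀i, hA₁i, hB₀i, hB₁i]
  abel

end Aux

/-- Tsirelson's bound for the CHSH expression. -/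
theorem stmt_4 {m n : Type*} [Fintype m] [Fintype n] [DecidableEq m] [DecidableEq n]
    (A₀ A₁ : Matrix m m ℂ) (B₀ B₁ : Matrix n n ℂ)
    (hA₀ : A₀.IsHermitian) (hA₁ : A₁.IsHermitian)
    (hB₀ : B₀.IsHermitian) (hB₁ : B₁.IsHermitian)
    (hA₀i : A₀ * A₀ = 1) (hA₁i : A₁ * A₁ = 1)
    (hB₀i : B₀ * B₀ = 1) (hB₁i : B₁ * B₁ = 1)
    (ψ : m × n → ℂ) (hψ : star ψ ⬝ᵥ ψ = 1) :
    (expVal ψ (A₀ ⊗ₖ B₀) + expVal ψ (A₀ ⊗ₖ B₁) + expVal ψ (A₁ ⊗ₖ B₀)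
      - expVal ψ (A₁ ⊗ₖ B₁)).re ≤ 2 * Real.sqrt 2 := by
  classical
  set D : Matrix m m ℂ := A₀ * A₁ - A₁ * A₀ with hD
  set E : Matrix n n ℂ := B₁ * B₀ - B₀ * B₁ with hE
  set C : Matrix (m × n) (m × n) ℂ := A₀ ⊗ₖ B₀ + A₀ ⊗ₖ B₁ + A₁ ⊗ₖ B₀ - A₁ ⊗ₖ B₁ with hC
  -- embedding into Euclidean space
  set e : ((m × n) → ℂ) → EuclideanSpace ℂ (m × n) := ⇑(WithLp.equiv 2 ((m × n) → ℂ)).symm with he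
  have hip : ∀ v w : (m × n) → ℂ, (inner ℂ (e v) (e w) : ℂ) = star v ⬝ᵥ w := fun v w =>
    by rw [dotProduct_comm]; rfl
  have adj : ∀ (M : Matrix (m × n) (m × n) ℂ) (v w : (m × n) → ℂ),
      star v ⬝ᵥ M.mulVec w = star (Mᴴ.mulVec v) ⬝ᵥ w := by
    intro M v w
    rw [Matrix.star_mulVec, Matrix.conjTranspose_conjTranspose, Matrix.dotProduct_mulVec]
  have hψn : ‖e ψ‖ = 1 := by
    have h1 : ‖e ψ‖ ^ 2 = 1 := by
      rw [← inner_self_eq_norm_sq (𝕜 := ℂ), hip, hψ]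
      simp
    nlinarith [norm_nonneg (e ψ)]
  -- ‖M ψ‖² as an expectation value
  have normsq : ∀ M : Matrix (m × n) (m × n) ℂ,
      ‖e (M.mulVec ψ)‖ ^ 2 = (star ψ ⬝ᵥ (Mᴴ * M).mulVec ψ).re := by
    intro M
    have h := adj Mᴴ ψ (M.mulVec ψ)
    rw [Matrix.conjTranspose_conjTranspose, Matrix.mulVec_mulVec] at h
    rw [← inner_self_eq_norm_sq (𝕜 := ℂ), hip, ← h]
    simp [RCLike.re_to_complex]
  -- if Mᴴ M + Sᴴ S = 4, then ‖Mψ‖² ≤ 4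
  have bound4 : ∀ M S : Matrix (m × n) (m × n) ℂ,
      Mᴴ * M + Sᴴ * S = (4 : ℂ) • 1 → ‖e (M.mulVec ψ)‖ ^ 2 ≤ 4 := by
    intro M S h
    have hsum : ‖e (M.mulVec ψ)‖ ^ 2 + ‖e (S.mulVec ψ)‖ ^ 2 = 4 := by
      rw [normsq M, normsq S, ← Complex.add_re, ← dotProduct_add, ← Matrix.add_mulVec, h,
        Matrix.smul_mulVec, Matrix.one_mulVec, dotProduct_smul, hψ]
      simp
    nlinarith [sq_nonneg ‖e (S.mulVec ψ)‖]
  -- bound for the A-side commutator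
  have crossD : ‖e ((Dᴴ ⊗ₖ (1 : Matrix n n ℂ)).mulVec ψ)‖ ^ 2 ≤ 4 := by
    apply bound4 _ ((A₀ * A₁ + A₁ * A₀) ⊗ₖ (1 : Matrix n n ℂ))
    rw [kron_conjT, kron_conjT, Matrix.conjTranspose_one, Matrix.conjTranspose_conjTranspose,
      ← Matrix.mul_kronecker_mul, ← Matrix.mul_kronecker_mul, Matrix.mul_one,
      ← add_kronecker]
    have hSm : (A₀ * A₁ + A₁ * A₀)ᴴ = A₀ * A₁ + A₁ * A₀ := by
      simp only [Matrix.conjTranspose_add, Matrix.conjTranspose_mul, hA₀.eq, hA₁.eq]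
      abel
    have hkey : D * Dᴴ + (A₀ * A₁ + A₁ * A₀)ᴴ * (A₀ * A₁ + A₁ * A₀) = (4 : ℂ) • 1 := by
      have hDH : Dᴴ = A₁ * A₀ - A₀ * A₁ := by
        simp only [hD, Matrix.conjTranspose_sub, Matrix.conjTranspose_mul, hA₀.eq, hA₁.eq]
      rw [hDH, hSm, hD]
      exact invol_key A₀ A₁ hA₀i hA₁i
    rw [hkey, smul_kronecker, Matrix.one_kronecker_one]
  -- bound for the B-side commutator
  have crossE : ‖e (((1 : Matrix m m ℂ) ⊗ₖ E).mulVec ψ)‖ ^ 2 ≤ 4 := by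
    apply bound4 _ ((1 : Matrix m m ℂ) ⊗ₖ (B₀ * B₁ + B₁ * B₀))
    rw [kron_conjT, kron_conjT, Matrix.conjTranspose_one,
      ← Matrix.mul_kronecker_mul, ← Matrix.mul_kronecker_mul, Matrix.mul_one,
      ← kronecker_add]
    have hkey : Eᴴ * E + (B₀ * B₁ + B₁ * B₀)ᴴ * (B₀ * B₁ + B₁ * B₀) = (4 : ℂ) • 1 := by
      have hEH : Eᴴ = B₀ * B₁ - B₁ * B₀ := by
        simp only [hE, Matrix.conjTranspose_sub, Matrix.conjTranspose_mul, hB₀.eq, hB₁.eq]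
      have hSn : (B₀ * B₁ + B₁ * B₀)ᴴ = B₀ * B₁ + B₁ * B₀ := by
        simp only [Matrix.conjTranspose_add, Matrix.conjTranspose_mul, hB₀.eq, hB₁.eq]
        abel
      rw [hEH, hSn, hE]
      exact invol_key B₀ B₁ hB₀i hB₁i
    rw [hkey, kronecker_smul, Matrix.one_kronecker_one]
  -- the cross term is at most 4
  have hcross : (star ψ ⬝ᵥ (D ⊗ₖ E).mulVec ψ).re ≤ 4 := by
    have hfact : D ⊗ₖ E = (D ⊗ₖ (1 : Matrix n n ℂ)) * ((1 : Matrix m m ℂ) ⊗ₖ E) := by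
      rw [← Matrix.mul_kronecker_mul, Matrix.mul_one, Matrix.one_mul]
    have hDH1 : (D ⊗ₖ (1 : Matrix n n ℂ))ᴴ = Dᴴ ⊗ₖ (1 : Matrix n n ℂ) := by
      rw [kron_conjT, Matrix.conjTranspose_one]
    have heq : star ψ ⬝ᵥ (D ⊗ₖ E).mulVec ψ
        = (inner ℂ (e ((Dᴴ ⊗ₖ (1 : Matrix n n ℂ)).mulVec ψ))
            (e (((1 : Matrix m m ℂ) ⊗ₖ E).mulVec ψ)) : ℂ) := by
      rw [hip, hfact, ← Matrix.mulVec_mulVec, adj, hDH1]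
    have hd : ‖e ((Dᴴ ⊗ₖ (1 : Matrix n n ℂ)).mulVec ψ)‖ ≤ 2 := by
      nlinarith [norm_nonneg (e ((Dᴴ ⊗ₖ (1 : Matrix n n ℂ)).mulVec ψ))]
    have hen : ‖e (((1 : Matrix m m ℂ) ⊗ₖ E).mulVec ψ)‖ ≤ 2 := by
      nlinarith [norm_nonneg (e (((1 : Matrix m m ℂ) ⊗ₖ E).mulVec ψ))]
    have hre := re_inner_le_norm (𝕜 := ℂ) (e ((Dᴴ ⊗ₖ (1 : Matrix n n ℂ)).mulVec ψ))
      (e (((1 : Matrix m m ℂ) ⊗ₖ E).mulVec ψ))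
    have hnn : (0 : ℝ) ≤ ‖e ((Dᴴ ⊗ₖ (1 : Matrix n n ℂ)).mulVec ψ)‖ := norm_nonneg _
    have hnn2 : (0 : ℝ) ≤ ‖e (((1 : Matrix m m ℂ) ⊗ₖ E).mulVec ψ)‖ := norm_nonneg _
    calc (star ψ ⬝ᵥ (D ⊗ₖ E).mulVec ψ).re
        = RCLike.re (inner ℂ (e ((Dᴴ ⊗ₖ (1 : Matrix n n ℂ)).mulVec ψ))
            (e (((1 : Matrix m m ℂ) ⊗ₖ E).mulVec ψ)) : ℂ) := by
          rw [heq]; simp [RCLike.re_to_complex]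
      _ ≤ ‖e ((Dᴴ ⊗ₖ (1 : Matrix n n ℂ)).mulVec ψ)‖
            * ‖e (((1 : Matrix m m ℂ) ⊗ₖ E).mulVec ψ)‖ := hre
      _ ≤ 2 * 2 := by nlinarith
      _ = 4 := by norm_num
  -- norm of C ψ
  have hCH : Cᴴ = C := by
    simp only [hC, Matrix.conjTranspose_add, Matrix.conjTranspose_sub, kron_conjT,
      hA₀.eq, hA₁.eq, hB₀.eq, hB₁.eq]
  have hCsq : ‖e (C.mulVec ψ)‖ ^ 2 ≤ 8 := by
    rw [normsq C, hCH, hC, chsh_sq A₀ A₁ B₀ B₁ hA₀i hA₁i hB₀i hB₁i]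
    rw [Matrix.add_mulVec, dotProduct_add, Complex.add_re,
      Matrix.smul_mulVec, Matrix.one_mulVec, dotProduct_smul, hψ]
    have : ((4 : ℂ) • (1 : ℂ)).re = 4 := by simp
    rw [this]
    linarith [hcross]
  -- assemble
  have hsum : expVal ψ (A₀ ⊗ₖ B₀) + expVal ψ (A₀ ⊗ₖ B₁) + expVal ψ (A₁ ⊗ₖ B₀)
      - expVal ψ (A₁ ⊗ₖ B₁) = star ψ ⬝ᵥ C.mulVec ψ := by
    simp [expVal, hC, Matrix.add_mulVec, Matrix.sub_mulVec, dotProduct_add, dotProduct_sub]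
  rw [hsum]
  have h1 : (star ψ ⬝ᵥ C.mulVec ψ).re ≤ ‖e (C.mulVec ψ)‖ := by
    have := re_inner_le_norm (𝕜 := ℂ) (e ψ) (e (C.mulVec ψ))
    rw [hip, hψn, one_mul] at this
    simpa [RCLike.re_to_complex] using this
  have h2 : ‖e (C.mulVec ψ)‖ ≤ 2 * Real.sqrt 2 := by
    have hs : (2 * Real.sqrt 2) ^ 2 = 8 := by
      rw [mul_pow, Real.sq_sqrt (by norm_num : (0:ℝ) ≤ 2)]
      norm_num
    nlinarith [norm_nonneg (e (C.mulVec ψ)), Real.sqrt_nonneg 2]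
  linarith
end

section
/- Let |C₄⟩ = (|00⟩⊗|φ⁺⟩ + |11⟩⊗|φ⁻⟩)/√2 on (ℂ²)⊗4, where |φ^±⟩ = (|00⟩ ± |11⟩)/√2. With observables A₀ = B₀ = C₀ = D₂ = Z, A₁ = B₁ = C₁ = X, D₀ = (Z+X)/√2, D₁ = (Z−X)/√2 (acting on the respective tensor factors), the value of 2⟨A₀B₀⟩ + 2⟨C₀D₂⟩ + 2⟨A₁B₁D₂⟩ + ⟨C₀D₀⟩ + ⟨C₀D₁⟩ + ⟨B₀C₁D₀⟩ − ⟨B₀C₁D₁⟩ on |C₄⟩ equals 6 + 2√2. -/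
open Matrix

noncomputable section

/-- Pauli Z. -/
def PZ : Matrix (Fin 2) (Fin 2) ℂ := !![1, 0; 0, -1]

/-- Pauli X. -/
def PX : Matrix (Fin 2) (Fin 2) ℂ := !![0, 1; 1, 0]

/-- The 4-qubit cluster state |C₄⟩ = ½(|0000⟩ + |0011⟩ + |1100⟩ − |1111⟩). -/
def C4 : Fin 2 × Fin 2 × Fin 2 × Fin 2 → ℂ := fun x =>
  (1 / 2 : ℂ) *
    (if x = (0, 0, 0, 0) then 1
     else if x = (0, 0, 1, 1) then 1
     else if x = (1, 1, 0, 0) then 1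
     else if x = (1, 1, 1, 1) then -1
     else 0)

/-- Expectation ⟨ψ, (A ⊗ B ⊗ C ⊗ D) ψ⟩ on a 4-qubit state. -/
def expVal4 (ψ : Fin 2 × Fin 2 × Fin 2 × Fin 2 → ℂ)
    (A B C D : Matrix (Fin 2) (Fin 2) ℂ) : ℂ :=
  ∑ i, ∑ j, ∑ k, ∑ l, ∑ i', ∑ j', ∑ k', ∑ l',
    star (ψ (i, j, k, l)) * A i i' * B j j' * C k k' * D l l' * ψ (i', j', k', l')


set_option maxHeartbeats 2000000 in
private lemma e1 : expVal4 C4 PZ PZ 1 1 = 1 := by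
  simp only [expVal4, C4, PZ, Fin.sum_univ_two]
  norm_num [Matrix.one_apply, Prod.ext_iff, Fin.ext_iff]

set_option maxHeartbeats 2000000 in
private lemma e2 : expVal4 C4 1 1 PZ PZ = 1 := by
  simp only [expVal4, C4, PZ, Fin.sum_univ_two]
  norm_num [Matrix.one_apply, Prod.ext_iff, Fin.ext_iff]

set_option maxHeartbeats 2000000 in
private lemma e3 : expVal4 C4 PX PX 1 PZ = 1 := by
  simp only [expVal4, C4, PZ, PX, Fin.sum_univ_two]
  norm_num [Matrix.one_apply, Prod.ext_iff, Fin.ext_iff]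

set_option maxHeartbeats 2000000 in
private lemma L1 (c : ℂ) : expVal4 C4 1 1 PZ (c • (PZ + PX)) = c := by
  simp only [expVal4, C4, PZ, PX, Matrix.smul_apply, Matrix.add_apply, smul_eq_mul,
    Fin.sum_univ_two]
  norm_num [Matrix.one_apply, Prod.ext_iff, Fin.ext_iff]
  ring

set_option maxHeartbeats 2000000 in
private lemma L2 (c : ℂ) : expVal4 C4 1 1 PZ (c • (PZ - PX)) = c := by
  simp only [expVal4, C4, PZ, PX, Matrix.smul_apply, Matrix.sub_apply, smul_eq_mul,
    Fin.sum_univ_two]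
  norm_num [Matrix.one_apply, Prod.ext_iff, Fin.ext_iff]
  ring

set_option maxHeartbeats 2000000 in
private lemma L3 (c : ℂ) : expVal4 C4 1 PZ PX (c • (PZ + PX)) = c := by
  simp only [expVal4, C4, PZ, PX, Matrix.smul_apply, Matrix.add_apply, smul_eq_mul,
    Fin.sum_univ_two]
  norm_num [Matrix.one_apply, Prod.ext_iff, Fin.ext_iff]
  ring

set_option maxHeartbeats 2000000 in
private lemma L4 (c : ℂ) : expVal4 C4 1 PZ PX (c • (PZ - PX)) = -c := by
  simp only [expVal4, C4, PZ, PX, Matrix.smul_apply, Matrix.sub_apply, smul_eq_mul,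
    Fin.sum_univ_two]
  norm_num [Matrix.one_apply, Prod.ext_iff, Fin.ext_iff]
  ring

theorem stmt_5 :
    2 * expVal4 C4 PZ PZ 1 1 + 2 * expVal4 C4 1 1 PZ PZ + 2 * expVal4 C4 PX PX 1 PZ
      + expVal4 C4 1 1 PZ ((Real.sqrt 2 : ℂ)⁻¹ • (PZ + PX))
      + expVal4 C4 1 1 PZ ((Real.sqrt 2 : ℂ)⁻¹ • (PZ - PX))
      + expVal4 C4 1 PZ PX ((Real.sqrt 2 : ℂ)⁻¹ • (PZ + PX))
      - expVal4 C4 1 PZ PX ((Real.sqrt 2 : ℂ)⁻¹ • (PZ - PX))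
      = 6 + 2 * (Real.sqrt 2 : ℂ) := by
  rw [e1, e2, e3, L1, L2, L3, L4]
  have hs : (Real.sqrt 2 : ℂ) * (Real.sqrt 2 : ℂ) = 2 := by
    rw [← Complex.ofReal_mul]
    norm_num [Real.mul_self_sqrt]
  have hne : (Real.sqrt 2 : ℂ) ≠ 0 := by
    intro h; rw [h] at hs; simpa using hs.symm
  field_simp
  linear_combination (-2 : ℂ) * hs

end
end
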